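/- Let C be a coalgebra, A an algebra and a right C-comodule with coaction Δ_A, and B := {b ∈ A : ∀ a ∈ A, Δ_A(ba) = b·Δ_A(a)} (i.e. Δ_A(ba) = b a₍₀₎ ⊗ a₍₁₎). Suppose there exists a convolution invertible right C-comodule map Φ : C → A such that for every a ∈ A, a₍₀₎ Φ⁻¹(a₍₁₎) ∈ B. Then the canonical map can : A ⊗_B A → A ⊗ C, a ⊗ a' ↦ a a'₍₀₎ ⊗ a'₍₁₎ is bijective, with inverse a ⊗ c ↦ a Φ⁻¹(c₍₁₎) ⊗_B Φ(c₍₂₎). -/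
import Mathlib


open TensorProduct LinearMap

/-- An entwining structure `(A, C)_ψ`. -/
structure Entwining (k A C : Type) [Field k] [Ring A] [Algebra k A]
    [AddCommGroup C] [Module k C] [Coalgebra k C] where
  ψ : C ⊗[k] A →ₗ[k] A ⊗[k] C
  entw_mul : ψ ∘ₗ (mul' k A).lTensor C =
    (mul' k A).rTensor C ∘ₗ (TensorProduct.assoc k A A C).symm.toLinearMap ∘ₗ
      ψ.lTensor A ∘ₗ (TensorProduct.assoc k A C A).toLinearMap ∘ₗ
      ψ.rTensor A ∘ₗ (TensorProduct.assoc k C A A).symm.toLinearMap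
  entw_unit : ∀ c : C, ψ (c ⊗ₜ[k] 1) = 1 ⊗ₜ[k] c
  entw_comul : (Coalgebra.comul (R := k) (A := C)).lTensor A ∘ₗ ψ =
    (TensorProduct.assoc k A C C).toLinearMap ∘ₗ ψ.rTensor C ∘ₗ
      (TensorProduct.assoc k C A C).symm.toLinearMap ∘ₗ ψ.lTensor C ∘ₗ
      (TensorProduct.assoc k C C A).toLinearMap ∘ₗ
      (Coalgebra.comul (R := k) (A := C)).rTensor A
  entw_counit : (TensorProduct.rid k A).toLinearMap ∘ₗ
      (Coalgebra.counit (R := k) (A := C)).lTensor A ∘ₗ ψ =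
    (TensorProduct.lid k A).toLinearMap ∘ₗ (Coalgebra.counit (R := k) (A := C)).rTensor A

/-- A right `C`-comodule structure on `V`. -/
structure RComod (k C V : Type) [Field k] [AddCommGroup C] [Module k C] [Coalgebra k C]
    [AddCommGroup V] [Module k V] where
  ρ : V →ₗ[k] V ⊗[k] C
  coassoc : (Coalgebra.comul (R := k) (A := C)).lTensor V ∘ₗ ρ =
    (TensorProduct.assoc k V C C).toLinearMap ∘ₗ ρ.rTensor C ∘ₗ ρ
  counit_id : (TensorProduct.rid k V).toLinearMap ∘ₗ
      (Coalgebra.counit (R := k) (A := C)).lTensor V ∘ₗ ρ = LinearMap.id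

/-- A left `C`-comodule structure on `V`. -/
structure LComod (k C V : Type) [Field k] [AddCommGroup C] [Module k C] [Coalgebra k C]
    [AddCommGroup V] [Module k V] where
  ρ : V →ₗ[k] C ⊗[k] V
  coassoc : (Coalgebra.comul (R := k) (A := C)).rTensor V ∘ₗ ρ =
    (TensorProduct.assoc k C C V).symm.toLinearMap ∘ₗ ρ.lTensor C ∘ₗ ρ
  counit_id : (TensorProduct.lid k V).toLinearMap ∘ₗ
      (Coalgebra.counit (R := k) (A := C)).rTensor V ∘ₗ ρ = LinearMap.id

/-- A right `A`-module structure (`k`-linear) on `M`. -/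
structure RAct (k A M : Type) [Field k] [Ring A] [Algebra k A]
    [AddCommGroup M] [Module k M] where
  act : M ⊗[k] A →ₗ[k] M
  act_one : ∀ m : M, act (m ⊗ₜ[k] 1) = m
  act_mul : ∀ (m : M) (a b : A),
    act (act (m ⊗ₜ[k] a) ⊗ₜ[k] b) = act (m ⊗ₜ[k] (a * b))

variable {k A C M : Type} [Field k] [Ring A] [Algebra k A]
  [AddCommGroup C] [Module k C] [Coalgebra k C] [AddCommGroup M] [Module k M]

/-- The compatibility condition making `M` an entwined `(A,C)_ψ`-module. -/
def EntwCompat (E : Entwining k A C) (α : RAct k A M) (ρM : RComod k C M) : Prop :=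
  ρM.ρ ∘ₗ α.act = α.act.rTensor C ∘ₗ (TensorProduct.assoc k M A C).symm.toLinearMap ∘ₗ
    E.ψ.lTensor M ∘ₗ (TensorProduct.assoc k M C A).toLinearMap ∘ₗ ρM.ρ.rTensor A

/-- The `A`-action on `M ⊗ C` induced by an entwining: `(m⊗c)·a = m·a_α ⊗ c^α`. -/
noncomputable def entwAct (E : Entwining k A C) (ν : M ⊗[k] A →ₗ[k] M) :
    (M ⊗[k] C) ⊗[k] A →ₗ[k] M ⊗[k] C :=
  ν.rTensor C ∘ₗ (TensorProduct.assoc k M A C).symm.toLinearMap ∘ₗ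
    E.ψ.lTensor M ∘ₗ (TensorProduct.assoc k M C A).toLinearMap

/-- The `C`-coaction `M ⊗ Δ` on `M ⊗ C`. -/
noncomputable def coactMC (k C M : Type) [Field k] [AddCommGroup C] [Module k C]
    [Coalgebra k C] [AddCommGroup M] [Module k M] :
    M ⊗[k] C →ₗ[k] (M ⊗[k] C) ⊗[k] C :=
  (TensorProduct.assoc k M C C).symm.toLinearMap ∘ₗ
    (Coalgebra.comul (R := k) (A := C)).lTensor M

/-- The coaction on `V ⊗ A` induced by an entwining: `v⊗a ↦ v₍₀₎ ⊗ ψ(v₍₁₎⊗a)`. -/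
noncomputable def entwCoact {V : Type} [AddCommGroup V] [Module k V]
    (E : Entwining k A C) (ρV : V →ₗ[k] V ⊗[k] C) :
    V ⊗[k] A →ₗ[k] (V ⊗[k] A) ⊗[k] C :=
  (TensorProduct.assoc k V A C).symm.toLinearMap ∘ₗ E.ψ.lTensor V ∘ₗ
    (TensorProduct.assoc k V C A).toLinearMap ∘ₗ ρV.rTensor A

/-- The action `V ⊗ μ` on `V ⊗ A`. -/
noncomputable def actVA (k : Type) (A V : Type) [Field k] [Ring A] [Algebra k A]
    [AddCommGroup V] [Module k V] :
    (V ⊗[k] A) ⊗[k] A →ₗ[k] V ⊗[k] A :=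
  (mul' k A).lTensor V ∘ₗ (TensorProduct.assoc k V A A).toLinearMap

/-- The canonical map `A ⊗ₖ A → A ⊗ C`, `a ⊗ a' ↦ a a'₍₀₎ ⊗ a'₍₁₎`. -/
noncomputable def canHat (ΔA : A →ₗ[k] A ⊗[k] C) : A ⊗[k] A →ₗ[k] A ⊗[k] C :=
  (mul' k A).rTensor C ∘ₗ (TensorProduct.assoc k A A C).symm.toLinearMap ∘ₗ ΔA.lTensor A

/-- The subspace of relations defining `A ⊗_B A` inside `A ⊗ₖ A`. -/
noncomputable def relSub (k : Type) [Field k] {A : Type} [Ring A] [Algebra k A]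
    (B : Set A) : Submodule k (A ⊗[k] A) :=
  Submodule.span k {x | ∃ a a' b : A, b ∈ B ∧ x = (a * b) ⊗ₜ[k] a' - a ⊗ₜ[k] (b * a')}

/-- Convolution product of `f g : C → A`. -/
noncomputable def conv (f g : C →ₗ[k] A) : C →ₗ[k] A :=
  mul' k A ∘ₗ TensorProduct.map f g ∘ₗ Coalgebra.comul (R := k)

/-- The convolution unit `η ∘ ε`. -/
noncomputable def convUnit (k C A : Type) [Field k] [Ring A] [Algebra k A]
    [AddCommGroup C] [Module k C] [Coalgebra k C] : C →ₗ[k] A :=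
  Algebra.linearMap k A ∘ₗ Coalgebra.counit (R := k)

variable (k) in
/-- The subalgebra-defining set `B = {b ∈ A : ∀ a, Δ_A(ba) = bΔ_A(a)}`. -/
noncomputable def coinvB (ΔA : A →ₗ[k] A ⊗[k] C) : Set A :=
  {b | ∀ a : A, ΔA (b * a) = (LinearMap.mulLeft k b).rTensor C (ΔA a)}

/-- `A` as a right module over itself. -/
noncomputable def mulRAct (k A : Type) [Field k] [Ring A] [Algebra k A] : RAct k A A where
  act := mul' k A
  act_one := fun m => by simp [LinearMap.mul'_apply]
  act_mul := fun m a b => by simp [LinearMap.mul'_apply, mul_assoc]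

section Aux

variable {k A C : Type} [Field k] [Ring A] [Algebra k A]
  [AddCommGroup C] [Module k C] [Coalgebra k C]

/-- The candidate inverse `a ⊗ c ↦ aΦ⁻¹(c₁) ⊗ Φ(c₂)`. -/
noncomputable def invHat (Φinv Φ : C →ₗ[k] A) : A ⊗[k] C →ₗ[k] A ⊗[k] A :=
  (mul' k A).rTensor A ∘ₗ (TensorProduct.assoc k A A A).symm.toLinearMap ∘ₗ
    (TensorProduct.map Φinv Φ).lTensor A ∘ₗ
    (Coalgebra.comul (R := k) (A := C)).lTensor A

lemma aux_canHat_tmul (ΔA : A →ₗ[k] A ⊗[k] C) (u v : A) :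
    canHat ΔA (u ⊗ₜ[k] v) = (LinearMap.mulLeft k u).rTensor C (ΔA v) := by
  have h : ∀ t : A ⊗[k] C,
      (mul' k A).rTensor C ((TensorProduct.assoc k A A C).symm (u ⊗ₜ[k] t)) =
        (LinearMap.mulLeft k u).rTensor C t := by
    intro t
    induction t using TensorProduct.induction_on with
    | zero => simp only [LinearMap.map_zero, tmul_zero, LinearEquiv.map_zero]
    | tmul p q => simp [mul'_apply]
    | add x y hx hy => simp only [tmul_add, map_add, hx, hy]
  simp only [canHat, LinearMap.comp_apply, LinearEquiv.coe_coe, lTensor_tmul]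
  exact h _

lemma aux_invHat_tmul (Φinv Φ : C →ₗ[k] A) (a : A) (c : C) :
    invHat Φinv Φ (a ⊗ₜ[k] c) =
      TensorProduct.map (LinearMap.mulLeft k a ∘ₗ Φinv) Φ
        (Coalgebra.comul (R := k) c) := by
  have h : ∀ t : C ⊗[k] C,
      (mul' k A).rTensor A ((TensorProduct.assoc k A A A).symm
          (a ⊗ₜ[k] TensorProduct.map Φinv Φ t)) =
        TensorProduct.map (LinearMap.mulLeft k a ∘ₗ Φinv) Φ t := by
    intro t
    induction t using TensorProduct.induction_on with
    | zero => simp only [LinearMap.map_zero, tmul_zero, LinearEquiv.map_zero]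
    | tmul p q => simp [mul'_apply]
    | add x y hx hy => simp only [map_add, tmul_add, hx, hy]
  simp only [invHat, LinearMap.comp_apply, LinearEquiv.coe_coe, lTensor_tmul]
  exact h _

lemma aux_mul'_rTensor_mulLeft (a : A) :
    mul' k A ∘ₗ (LinearMap.mulLeft k a).rTensor A = LinearMap.mulLeft k a ∘ₗ mul' k A := by
  apply TensorProduct.ext'
  intro x y
  simp [mul'_apply, mul_assoc]

lemma aux_map_mulLeft {M N : Type} [AddCommGroup M] [Module k M]
    [AddCommGroup N] [Module k N] (a : A) (f : M →ₗ[k] A) (g : N →ₗ[k] A) :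
    TensorProduct.map (LinearMap.mulLeft k a ∘ₗ f) g =
      (LinearMap.mulLeft k a).rTensor A ∘ₗ TensorProduct.map f g := by
  rw [rTensor, ← TensorProduct.map_comp]
  simp

end Aux

/-- if there is a convolution invertible right `C`-comodule map `Φ : C → A`
with `a₍₀₎Φ⁻¹(a₍₁₎) ∈ B` for all `a`, then the canonical map
`can : A ⊗_B A → A ⊗ C` is bijective with inverse `a ⊗ c ↦ aΦ⁻¹(c₍₁₎) ⊗_B Φ(c₍₂₎)`.
Here `A ⊗_B A` is encoded as `(A ⊗ₖ A)/relSub`, so bijectivity of `can` reads: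
`canHat` is surjective with kernel `relSub`, and the stated inverse is a two-sided
inverse modulo the relations. -/
theorem statement4 {k A C : Type} [Field k] [Ring A] [Algebra k A]
    [AddCommGroup C] [Module k C] [Coalgebra k C]
    (ΔA : RComod k C A) (Φ Φinv : C →ₗ[k] A)
    (hconv1 : conv Φ Φinv = convUnit k C A) (hconv2 : conv Φinv Φ = convUnit k C A)
    (hcolin : ΔA.ρ ∘ₗ Φ = Φ.rTensor C ∘ₗ Coalgebra.comul (R := k))
    (hB : ∀ a : A, mul' k A (Φinv.lTensor A (ΔA.ρ a)) ∈ coinvB k ΔA.ρ) :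
    Function.Surjective (canHat ΔA.ρ) ∧
    LinearMap.ker (canHat ΔA.ρ) = relSub k (coinvB k ΔA.ρ) ∧
    (canHat ΔA.ρ ∘ₗ
        ((mul' k A).rTensor A ∘ₗ (TensorProduct.assoc k A A A).symm.toLinearMap ∘ₗ
          (TensorProduct.map Φinv Φ).lTensor A ∘ₗ
          (Coalgebra.comul (R := k) (A := C)).lTensor A) = LinearMap.id) ∧
    (∀ x : A ⊗[k] A,
      ((mul' k A).rTensor A ∘ₗ (TensorProduct.assoc k A A A).symm.toLinearMap ∘ₗ
          (TensorProduct.map Φinv Φ).lTensor A ∘ₗ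
          (Coalgebra.comul (R := k) (A := C)).lTensor A) (canHat ΔA.ρ x) - x ∈
        relSub k (coinvB k ΔA.ρ)) := by
  -- abbreviation for the inverse map
  set bmap : A →ₗ[k] A := mul' k A ∘ₗ Φinv.lTensor A ∘ₗ ΔA.ρ with hbmap
  -- `canHat ∘ invHat = id`
  have h3 : canHat ΔA.ρ ∘ₗ invHat Φinv Φ = LinearMap.id := by
    apply TensorProduct.ext'
    intro a c
    simp only [LinearMap.comp_apply, LinearMap.id_apply]
    rw [aux_invHat_tmul]
    have key : ∀ t : C ⊗[k] C,
        canHat ΔA.ρ (TensorProduct.map (LinearMap.mulLeft k a ∘ₗ Φinv) Φ t) =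
        (mul' k A ∘ₗ TensorProduct.map (LinearMap.mulLeft k a ∘ₗ Φinv) Φ).rTensor C
          ((TensorProduct.assoc k C C C).symm
            ((Coalgebra.comul (R := k) (A := C)).lTensor C t)) := by
      intro t
      induction t using TensorProduct.induction_on with
      | zero => simp
      | tmul u v =>
        rw [TensorProduct.map_tmul, aux_canHat_tmul, lTensor_tmul]
        have hc : ΔA.ρ (Φ v) = Φ.rTensor C (Coalgebra.comul (R := k) v) :=
          LinearMap.congr_fun hcolin v
        have inner : ∀ s : C ⊗[k] C,
            (LinearMap.mulLeft k ((LinearMap.mulLeft k a ∘ₗ Φinv) u)).rTensor C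
                (Φ.rTensor C s) =
            (mul' k A ∘ₗ TensorProduct.map (LinearMap.mulLeft k a ∘ₗ Φinv) Φ).rTensor C
              ((TensorProduct.assoc k C C C).symm (u ⊗ₜ[k] s)) := by
          intro s
          induction s using TensorProduct.induction_on with
          | zero => simp only [LinearMap.map_zero, tmul_zero, LinearEquiv.map_zero]
          | tmul p q => simp [mul'_apply, mul_assoc]
          | add x y hx hy => simp only [map_add, tmul_add, hx, hy]
        rw [hc]
        exact inner _
      | add x y hx hy => simp only [map_add, hx, hy]
    rw [key, Coalgebra.coassoc_symm_apply, ← LinearMap.comp_apply,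
      ← LinearMap.rTensor_comp]
    have hcomp : (mul' k A ∘ₗ TensorProduct.map (LinearMap.mulLeft k a ∘ₗ Φinv) Φ) ∘ₗ
        (Coalgebra.comul (R := k) (A := C)) =
        (LinearMap.mulLeft k a ∘ₗ Algebra.linearMap k A) ∘ₗ
          (Coalgebra.counit (R := k) (A := C)) := by
      apply LinearMap.ext
      intro c'
      have h2 := LinearMap.congr_fun hconv2 c'
      simp only [conv, convUnit, LinearMap.comp_apply] at h2
      simp only [LinearMap.comp_apply]
      rw [aux_map_mulLeft, LinearMap.comp_apply, ← LinearMap.comp_apply (mul' k A),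
        aux_mul'_rTensor_mulLeft, LinearMap.comp_apply, h2]
    rw [hcomp, LinearMap.rTensor_comp, LinearMap.comp_apply,
      Coalgebra.rTensor_counit_comul]
    simp
  -- `bmap x = x₍₀₎ Φ⁻¹(x₍₁₎)` lands in `B`
  have hmapcomp : TensorProduct.map bmap Φ =
      TensorProduct.map (mul' k A ∘ₗ Φinv.lTensor A) Φ ∘ₗ ΔA.ρ.rTensor C := by
    rw [LinearMap.rTensor, ← TensorProduct.map_comp, LinearMap.comp_id,
      hbmap, LinearMap.comp_assoc]
  have hco : (Coalgebra.comul (R := k) (A := C)).lTensor A ∘ₗ ΔA.ρ =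
      (TensorProduct.assoc k A C C).toLinearMap ∘ₗ ΔA.ρ.rTensor C ∘ₗ ΔA.ρ := ΔA.coassoc
  -- `invHat (ρ x) = (bmap ⊗ Φ)(ρ x)`
  have hrho : ∀ x : A, invHat Φinv Φ (ΔA.ρ x) =
      TensorProduct.map bmap Φ (ΔA.ρ x) := by
    intro x
    have hcox : (Coalgebra.comul (R := k) (A := C)).lTensor A (ΔA.ρ x) =
        TensorProduct.assoc k A C C (ΔA.ρ.rTensor C (ΔA.ρ x)) := by
      have := LinearMap.congr_fun hco x
      simpa using this
    have hM : ∀ s : (A ⊗[k] C) ⊗[k] C,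
        (mul' k A).rTensor A ((TensorProduct.assoc k A A A).symm
          ((TensorProduct.map Φinv Φ).lTensor A (TensorProduct.assoc k A C C s))) =
        TensorProduct.map (mul' k A ∘ₗ Φinv.lTensor A) Φ s := by
      intro s
      induction s using TensorProduct.induction_on with
      | zero => simp only [LinearMap.map_zero, LinearEquiv.map_zero]
      | tmul pu v =>
        induction pu using TensorProduct.induction_on with
        | zero => simp only [zero_tmul, LinearMap.map_zero, LinearEquiv.map_zero]
        | tmul p u => simp [mul'_apply]
        | add x y hx hy => simp only [add_tmul, map_add, hx, hy]
      | add x y hx hy => simp only [map_add, hx, hy]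
    have h1 : invHat Φinv Φ (ΔA.ρ x) =
        TensorProduct.map (mul' k A ∘ₗ Φinv.lTensor A) Φ (ΔA.ρ.rTensor C (ΔA.ρ x)) := by
      simp only [invHat, LinearMap.comp_apply, LinearEquiv.coe_coe]
      rw [hcox]
      exact hM _
    rw [h1, hmapcomp, LinearMap.comp_apply]
  -- `μ ∘ (bmap ⊗ Φ) ∘ ρ = id`
  have hmu : ∀ x : A, mul' k A (TensorProduct.map bmap Φ (ΔA.ρ x)) = x := by
    intro x
    rw [hmapcomp, LinearMap.comp_apply]
    have hcox : ΔA.ρ.rTensor C (ΔA.ρ x) = (TensorProduct.assoc k A C C).symm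
        ((Coalgebra.comul (R := k) (A := C)).lTensor A (ΔA.ρ x)) := by
      have := LinearMap.congr_fun hco x
      simp only [LinearMap.comp_apply, LinearEquiv.coe_coe] at this
      rw [this, LinearEquiv.symm_apply_apply]
    rw [hcox]
    have hN : ∀ t : A ⊗[k] (C ⊗[k] C),
        mul' k A (TensorProduct.map (mul' k A ∘ₗ Φinv.lTensor A) Φ
          ((TensorProduct.assoc k A C C).symm t)) =
        mul' k A ((mul' k A ∘ₗ TensorProduct.map Φinv Φ).lTensor A t) := by
      intro t
      induction t using TensorProduct.induction_on with
      | zero => simp only [LinearMap.map_zero, LinearEquiv.map_zero]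
      | tmul p uv =>
        induction uv using TensorProduct.induction_on with
        | zero => simp only [tmul_zero, LinearMap.map_zero, LinearEquiv.map_zero]
        | tmul u v => simp [mul'_apply, mul_assoc]
        | add x y hx hy => simp only [tmul_add, map_add, hx, hy]
      | add x y hx hy => simp only [map_add, hx, hy]
    rw [hN, ← LinearMap.lTensor_comp_apply]
    have hconv' : (mul' k A ∘ₗ TensorProduct.map Φinv Φ) ∘ₗ
        (Coalgebra.comul (R := k) (A := C)) =
        Algebra.linearMap k A ∘ₗ (Coalgebra.counit (R := k) (A := C)) := by
      rw [LinearMap.comp_assoc]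
      exact hconv2
    rw [hconv', LinearMap.lTensor_comp_apply]
    have hrid : ∀ s : A ⊗[k] k,
        mul' k A ((Algebra.linearMap k A).lTensor A s) = TensorProduct.rid k A s := by
      intro s
      induction s using TensorProduct.induction_on with
      | zero => simp
      | tmul p r => simp [mul'_apply, Algebra.smul_def, ← Algebra.commutes]
      | add x y hx hy => simp only [map_add, hx, hy]
    rw [hrid]
    have := LinearMap.congr_fun ΔA.counit_id x
    simpa using this
  -- the relation step
  have hrel : ∀ (a : A) (t : A ⊗[k] C),
      TensorProduct.map (LinearMap.mulLeft k a ∘ₗ bmap) Φ t -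
        a ⊗ₜ[k] mul' k A (TensorProduct.map bmap Φ t) ∈ relSub k (coinvB k ΔA.ρ) := by
    intro a t
    induction t using TensorProduct.induction_on with
    | zero => simpa using Submodule.zero_mem _
    | tmul x c =>
      apply Submodule.subset_span
      refine ⟨a, Φ c, bmap x, hB x, ?_⟩
      simp [mul'_apply]
    | add s t hs ht =>
      have h := Submodule.add_mem _ hs ht
      rw [sub_add_sub_comm, ← map_add, ← tmul_add, ← map_add, ← map_add] at h
      exact h
  -- the two-sided inverse modulo relations
  have h4 : ∀ x : A ⊗[k] A,
      invHat Φinv Φ (canHat ΔA.ρ x) - x ∈ relSub k (coinvB k ΔA.ρ) := by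
    intro x
    induction x using TensorProduct.induction_on with
    | zero => simpa using Submodule.zero_mem _
    | tmul a a' =>
      have hcomm : ∀ t : A ⊗[k] C,
          invHat Φinv Φ ((LinearMap.mulLeft k a).rTensor C t) =
            (LinearMap.mulLeft k a).rTensor A (invHat Φinv Φ t) := by
        intro t
        induction t using TensorProduct.induction_on with
        | zero => simp
        | tmul p u =>
          rw [rTensor_tmul, aux_invHat_tmul, aux_invHat_tmul, LinearMap.mulLeft_apply,
            LinearMap.mulLeft_mul, LinearMap.comp_assoc, aux_map_mulLeft]
          rfl
        | add x y hx hy => simp only [map_add, hx, hy]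
      have h1 : invHat Φinv Φ (canHat ΔA.ρ (a ⊗ₜ[k] a')) =
          TensorProduct.map (LinearMap.mulLeft k a ∘ₗ bmap) Φ (ΔA.ρ a') := by
        rw [aux_canHat_tmul, hcomm, hrho, aux_map_mulLeft]
        rfl
      rw [h1]
      have h := hrel a (ΔA.ρ a')
      rwa [hmu a'] at h
    | add x y hx hy =>
      have h := Submodule.add_mem _ hx hy
      rw [sub_add_sub_comm, ← map_add, ← map_add] at h
      exact h
  refine ⟨?_, ?_, h3, h4⟩
  · intro t
    exact ⟨invHat Φinv Φ t, LinearMap.congr_fun h3 t⟩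
  · apply le_antisymm
    · intro x hx
      have h := h4 x
      rw [LinearMap.mem_ker.mp hx, map_zero, zero_sub] at h
      simpa using Submodule.neg_mem _ h
    · rw [relSub]
      apply Submodule.span_le.mpr
      rintro x ⟨a, a', b, hb, rfl⟩
      simp only [SetLike.mem_coe, LinearMap.mem_ker, map_sub]
      rw [aux_canHat_tmul, aux_canHat_tmul, hb a', LinearMap.mulLeft_mul,
        LinearMap.rTensor_comp, LinearMap.comp_apply, sub_self]
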